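/- If subspaces W₁,...,W_N of ℝ^M allow phase retrieval, then there exists δ > 0 such that for all x, y ∈ ℝ^M with x ⊥ y, ‖x‖ = 1, and 0 < ‖y‖ ≤ 1, there exists n ∈ {1,...,N} with |‖P_n x‖ − ‖P_n y‖| > δ. -/

import Mathlib

open RealInnerProductSpace

/-- If subspaces allow phase retrieval, the measurements separate orthogonal pairs
uniformly: there is δ > 0 with |‖P_n x‖ - ‖P_n y‖| > δ for some n, whenever x ⊥ y,
‖x‖ = 1 and 0 < ‖y‖ ≤ 1. -/
theorem stmt_9 (M N : ℕ) (W : Fin N → Submodule ℝ (EuclideanSpace ℝ (Fin M)))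
    (hPR : ∀ x y : EuclideanSpace ℝ (Fin M),
        (∀ n, ‖(W n).orthogonalProjectionOnto x‖ = ‖(W n).orthogonalProjectionOnto y‖) →
        x = y ∨ x = -y) :
    ∃ δ > (0 : ℝ), ∀ x y : EuclideanSpace ℝ (Fin M), ⟪x, y⟫ = 0 → ‖x‖ = 1 →
      0 < ‖y‖ → ‖y‖ ≤ 1 →
      ∃ n, |‖(W n).orthogonalProjectionOnto x‖ - ‖(W n).orthogonalProjectionOnto y‖| > δ := by
  set E := EuclideanSpace ℝ (Fin M)
  by_cases hM : ∃ x : E, ‖x‖ = 1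
  · obtain ⟨x₀, hx₀⟩ := hM
    rcases Nat.eq_zero_or_pos N with hN | hN
    · -- N = 0 : hypothesis is contradictory since x₀ ≠ ± 2•x₀
      exfalso
      rcases hPR x₀ ((2 : ℝ) • x₀) (fun n => (hN ▸ n).elim0) with h | h
      · have := congrArg norm h
        rw [norm_smul] at this
        simp [hx₀] at this
      · have := congrArg norm h
        rw [norm_neg, norm_smul] at this
        simp [hx₀] at this
    · -- main case
      set f : E × E → ℝ := fun p =>
        ∑ n, |‖(W n).orthogonalProjectionOnto p.1‖ - ‖(W n).orthogonalProjectionOnto p.2‖| with hf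
      have hcont : Continuous f := by
        apply continuous_finset_sum
        intro n _
        exact ((((((W n).orthogonalProjectionOnto).continuous.comp continuous_fst).norm).sub
          ((((W n).orthogonalProjectionOnto).continuous.comp continuous_snd).norm)).abs)
      set K : Set (E × E) := {p | ⟪p.1, p.2⟫ = 0 ∧ ‖p.1‖ = 1 ∧ ‖p.2‖ ≤ 1} with hK
      have hKne : K.Nonempty := ⟨(x₀, 0), by simp [hK, hx₀]⟩
      have hKclosed : IsClosed K := by
        have h1 : IsClosed {p : E × E | ⟪p.1, p.2⟫ = 0} :=
          isClosed_eq continuous_inner continuous_const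
        have h2 : IsClosed {p : E × E | ‖p.1‖ = 1} :=
          isClosed_eq continuous_fst.norm continuous_const
        have h3 : IsClosed {p : E × E | ‖p.2‖ ≤ 1} :=
          isClosed_le continuous_snd.norm continuous_const
        exact (h1.inter (h2.inter h3))
      have hKbdd : Bornology.IsBounded K := by
        apply (Metric.isBounded_closedBall (x := (0 : E × E)) (r := 1)).subset
        rintro ⟨x, y⟩ ⟨-, hx, hy⟩
        simp only [Metric.mem_closedBall, dist_zero_right, Prod.norm_def]
        exact max_le hx.le hy
      have hKcpt : IsCompact K := Metric.isCompact_of_isClosed_isBounded hKclosed hKbdd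
      obtain ⟨p, hpK, hpmin⟩ := hKcpt.exists_isMinOn hKne hcont.continuousOn
      have hfp : 0 < f p := by
        rcases hpK with ⟨hip, hxp, hyp⟩
        have hne : ∃ n, ‖(W n).orthogonalProjectionOnto p.1‖ ≠
            ‖(W n).orthogonalProjectionOnto p.2‖ := by
          by_contra hall
          push_neg at hall
          rcases hPR p.1 p.2 hall with h | h
          · rw [h, real_inner_self_eq_norm_sq] at hip
            rw [h] at hxp
            nlinarith
          · rw [h, inner_neg_left, real_inner_self_eq_norm_sq] at hip
            have h1 : ‖p.1‖ = ‖p.2‖ := by rw [h, norm_neg]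
            nlinarith
        obtain ⟨n, hn⟩ := hne
        exact Finset.sum_pos' (fun m _ => abs_nonneg _)
          ⟨n, Finset.mem_univ n, abs_pos.mpr (sub_ne_zero.mpr hn)⟩
      refine ⟨f p / (2 * N), by positivity, ?_⟩
      intro x y hxy hx hy0 hy1
      have hmem : (x, y) ∈ K := ⟨hxy, hx, hy1⟩
      have hsum : f p ≤ f (x, y) := hpmin hmem
      -- some term is ≥ f p / N
      by_contra hno
      push_neg at hno
      have : f (x, y) ≤ ∑ _n : Fin N, f p / (2 * N) := by
        apply Finset.sum_le_sum
        intro n _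
        exact hno n
      simp only [Finset.sum_const, Finset.card_univ, Fintype.card_fin, nsmul_eq_mul] at this
      have hNpos : (0 : ℝ) < N := by exact_mod_cast hN
      have : f (x, y) ≤ f p / 2 := by
        calc f (x, y) ≤ (N : ℝ) * (f p / (2 * N)) := this
          _ = f p / 2 := by field_simp
      linarith
  · refine ⟨1, one_pos, ?_⟩
    intro x y _ hx _ _
    exact absurd ⟨x, hx⟩ hM
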